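/- (Quantitative vector field bound) Assume V ∈ C²_b(ℝ^{dn}) and ω^{3/2−σ}χ ∈ L² with σ ∈ [1/2,1]. Then there exists C > 0 such that for all t ∈ ℝ and all u = (p,q,α) ∈ X^σ, ‖v(t,u)‖_{X^σ} ≤ C(‖u‖²_{X⁰} + 1), where v(t,u) = Φ^f_{−t}(𝒩(Φ^f_t(u))). In the semi-relativistic case one has the sharper bound ‖v(t,u)‖_{X^σ} ≤ C(‖α‖²_{L²} + 1). -/

import Mathlib

open MeasureTheory

noncomputable section

/-- The phase space X = ℝ^{dn} × ℝ^{dn} × {fields}: momenta (p_1,…,p_n), positions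
(flattened into ℝ^{n×d}) and the field α : ℝ^d → ℂ. -/
abbrev PhaseSpace (d n : ℕ) :=
  (Fin n → EuclideanSpace ℝ (Fin d)) × EuclideanSpace ℝ (Fin n × Fin d) ×
    (EuclideanSpace ℝ (Fin d) → ℂ)

/-- The dispersion relation ω(k) = √(|k|² + m²). -/
def omega (d : ℕ) (m : ℝ) (k : EuclideanSpace ℝ (Fin d)) : ℝ :=
  Real.sqrt (‖k‖ ^ 2 + m ^ 2)

/-- The j-th position block q_j ∈ ℝ^d of q ∈ ℝ^{n×d}. -/
def qblock (d n : ℕ) (q : EuclideanSpace ℝ (Fin n × Fin d)) (j : Fin n) :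
    EuclideanSpace ℝ (Fin d) :=
  WithLp.toLp 2 (fun i => q (j, i))

/-- The phase 2π k·x. -/
def phase (d : ℕ) (k x : EuclideanSpace ℝ (Fin d)) : ℝ :=
  2 * Real.pi * ∑ i, k i * x i

/-- The i-th component of
∇_{q_j} I_j(q,α) = ∫ 2πi k (χ(k)/√ω(k)) [α(k) e^{2πi k·q_j} − conj(α(k)) e^{−2πi k·q_j}] dk. -/
def gradI (d : ℕ) (m : ℝ) (χ : EuclideanSpace ℝ (Fin d) → ℝ)
    (qj : EuclideanSpace ℝ (Fin d)) (α : EuclideanSpace ℝ (Fin d) → ℂ) (i : Fin d) : ℂ :=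
  ∫ k : EuclideanSpace ℝ (Fin d),
    2 * (Real.pi : ℂ) * Complex.I * ((k i : ℝ) : ℂ) *
      ((χ k / Real.sqrt (omega d m k) : ℝ) : ℂ) *
      (α k * Complex.exp (((phase d k qj : ℝ) : ℂ) * Complex.I) -
        (starRingEnd ℂ) (α k) * Complex.exp (-(((phase d k qj : ℝ) : ℂ) * Complex.I)))

/-- The nonlinearity 𝒩 of the particle-field equation:
(𝒩(u))_{p_j} = −∇_{q_j}V(q) − ∇_{q_j}I_j(q,α), (𝒩(u))_{q_j} = ∇f_j(p_j),
(𝒩(u))_α(k) = −i Σ_j (χ(k)/√ω(k)) e^{−2πik·q_j}. -/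
def NL (d n : ℕ) (m : ℝ) (χ : EuclideanSpace ℝ (Fin d) → ℝ)
    (V : EuclideanSpace ℝ (Fin n × Fin d) → ℝ)
    (f : Fin n → EuclideanSpace ℝ (Fin d) → ℝ)
    (u : PhaseSpace d n) : PhaseSpace d n :=
  (fun j => (WithLp.toLp 2 (fun i => -(gradient V u.2.1 (j, i)) -
      (gradI d m χ (qblock d n u.2.1 j) u.2.2 i).re) : EuclideanSpace ℝ (Fin d)),
    (WithLp.toLp 2 (fun ji : Fin n × Fin d => gradient (f ji.1) (u.1 ji.1) ji.2) : EuclideanSpace ℝ (Fin n × Fin d)),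
    fun k => -Complex.I * ∑ j : Fin n, ((χ k / Real.sqrt (omega d m k) : ℝ) : ℂ) *
      Complex.exp (-(((phase d k (qblock d n u.2.1 j) : ℝ) : ℂ) * Complex.I)))

/-- The X^σ norm: ‖(p,q,α)‖² = Σ|p_j|² + Σ|q_j|² + ‖ω^σ α‖²_{L²}. -/
def normX (d n : ℕ) (σ m : ℝ) (u : PhaseSpace d n) : ℝ :=
  Real.sqrt ((∑ j, ‖u.1 j‖ ^ 2) + ‖u.2.1‖ ^ 2 +
    ((eLpNorm (fun k => ((omega d m k ^ σ : ℝ) : ℂ) * u.2.2 k) 2 volume).toReal) ^ 2)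

/-- The free field flow Φ^f_t(p,q,α) = (p, q, e^{−itω}α). -/
def freeFlow (d n : ℕ) (m : ℝ) (t : ℝ) (u : PhaseSpace d n) : PhaseSpace d n :=
  (u.1, u.2.1, fun k => Complex.exp (-(Complex.I * (t : ℂ) * ((omega d m k : ℝ) : ℂ))) * u.2.2 k)

/-- The non-autonomous vector field v(t,u) = Φ^f_{−t} ∘ 𝒩 ∘ Φ^f_t(u). -/
def vfield (d n : ℕ) (m : ℝ) (χ : EuclideanSpace ℝ (Fin d) → ℝ)
    (V : EuclideanSpace ℝ (Fin n × Fin d) → ℝ)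
    (f : Fin n → EuclideanSpace ℝ (Fin d) → ℝ)
    (t : ℝ) (u : PhaseSpace d n) : PhaseSpace d n :=
  freeFlow d n m (-t) (NL d n m χ V f (freeFlow d n m t u))

end
section Aux

open Real MeasureTheory

variable {d : ℕ} {m σ : ℝ}

lemma omega_pos (hm : 0 < m) (k : EuclideanSpace ℝ (Fin d)) : 0 < omega d m k :=
  Real.sqrt_pos.2 (by positivity)

lemma m_le_omega (hm : 0 < m) (k : EuclideanSpace ℝ (Fin d)) : m ≤ omega d m k := by
  have : m = Real.sqrt (m ^ 2) := (Real.sqrt_sq hm.le).symm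
  rw [this, omega]
  exact Real.sqrt_le_sqrt (by nlinarith [sq_nonneg ‖k‖])

lemma norm_le_omega (k : EuclideanSpace ℝ (Fin d)) : ‖k‖ ≤ omega d m k := by
  have : ‖k‖ = Real.sqrt (‖k‖ ^ 2) := (Real.sqrt_sq (norm_nonneg _)).symm
  rw [this, omega]
  exact Real.sqrt_le_sqrt (by nlinarith [sq_nonneg m])

lemma continuous_omega : Continuous (omega d m) :=
  Real.continuous_sqrt.comp ((continuous_norm.pow 2).add continuous_const)

lemma omega_rpow_le (hm : 0 < m) (k : EuclideanSpace ℝ (Fin d)) {s t : ℝ} (hst : s ≤ t) :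
    omega d m k ^ s ≤ m ^ (s - t) * omega d m k ^ t := by
  have hw := omega_pos hm (k := k)
  have h1 : omega d m k ^ (s - t) ≤ m ^ (s - t) :=
    Real.rpow_le_rpow_of_nonpos hm (m_le_omega hm k) (by linarith)
  calc omega d m k ^ s = omega d m k ^ (s - t) * omega d m k ^ t := by
        rw [← Real.rpow_add hw]; ring_nf
    _ ≤ m ^ (s - t) * omega d m k ^ t :=
        mul_le_mul_of_nonneg_right h1 (Real.rpow_nonneg hw.le t)

lemma coord_le_norm {ι : Type*} [Fintype ι] (x : EuclideanSpace ℝ ι) (i : ι) : |x i| ≤ ‖x‖ := by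
  rw [EuclideanSpace.norm_eq]
  calc |x i| = Real.sqrt (‖x i‖ ^ 2) := by
        rw [Real.sqrt_sq (norm_nonneg _), Real.norm_eq_abs]
    _ ≤ _ := Real.sqrt_le_sqrt
        (Finset.single_le_sum (f := fun j => ‖x j‖ ^ 2) (fun j _ => sq_nonneg _)
          (Finset.mem_univ i))

lemma euclid_norm_sq {ι : Type*} [Fintype ι] (x : EuclideanSpace ℝ ι) :
    ‖x‖ ^ 2 = ∑ i, ‖x i‖ ^ 2 := by
  rw [EuclideanSpace.norm_eq, Real.sq_sqrt (by positivity)]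

lemma prod_norm_sq {n d : ℕ} (g : Fin n → EuclideanSpace ℝ (Fin d))
    (x : EuclideanSpace ℝ (Fin n × Fin d)) (hx : ∀ ji, x ji = g ji.1 ji.2) :
    ‖x‖ ^ 2 = ∑ j, ‖g j‖ ^ 2 := by
  rw [euclid_norm_sq, Fintype.sum_prod_type]
  refine Finset.sum_congr rfl fun j _ => ?_
  rw [euclid_norm_sq (g j)]
  exact Finset.sum_congr rfl fun i _ => by rw [hx (j, i)]

lemma sqrt_add3_le {A B C a b c : ℝ} (hA : A ≤ a ^ 2) (hB : B ≤ b ^ 2) (hC : C ≤ c ^ 2)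
    (ha : 0 ≤ a) (hb : 0 ≤ b) (hc : 0 ≤ c) : Real.sqrt (A + B + C) ≤ a + b + c := by
  have h : A + B + C ≤ (a + b + c) ^ 2 := by nlinarith
  calc Real.sqrt (A + B + C) ≤ Real.sqrt ((a + b + c) ^ 2) := Real.sqrt_le_sqrt h
    _ = a + b + c := Real.sqrt_sq (by positivity)

end Aux
section Aux2

open Real MeasureTheory

variable {d : ℕ} {m σ : ℝ}

lemma integral_mul_le_L2 {E : Type*} [MeasurableSpace E] {μ : Measure E} {G H : E → ℝ}
    (hGn : ∀ x, 0 ≤ G x) (hHn : ∀ x, 0 ≤ H x) (hG : MemLp G 2 μ) (hH : MemLp H 2 μ) :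
    ∫ x, G x * H x ∂μ ≤ (eLpNorm G 2 μ).toReal * (eLpNorm H 2 μ).toReal := by
  have hpq : Real.HolderConjugate 2 2 := Real.HolderConjugate.two_two
  have h2 : ENNReal.ofReal (2 : ℝ) = 2 := by norm_num
  have key := MeasureTheory.integral_mul_norm_le_Lp_mul_Lq hpq
    (f := G) (g := H) (by rw [h2]; exact hG) (by rw [h2]; exact hH)
  have eint : ∫ x, G x * H x ∂μ = ∫ x, ‖G x‖ * ‖H x‖ ∂μ := by
    refine integral_congr_ae (Filter.Eventually.of_forall fun x => ?_)
    simp only [Real.norm_of_nonneg (hGn x), Real.norm_of_nonneg (hHn x)]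
  have eG : (eLpNorm G 2 μ).toReal = (∫ x, ‖G x‖ ^ (2 : ℝ) ∂μ) ^ ((1 : ℝ) / 2) := by
    rw [hG.eLpNorm_eq_integral_rpow_norm (by norm_num) (by norm_num)]
    rw [ENNReal.toReal_ofReal (by positivity)]
    norm_num
  have eH : (eLpNorm H 2 μ).toReal = (∫ x, ‖H x‖ ^ (2 : ℝ) ∂μ) ^ ((1 : ℝ) / 2) := by
    rw [hH.eLpNorm_eq_integral_rpow_norm (by norm_num) (by norm_num)]
    rw [ENNReal.toReal_ofReal (by positivity)]
    norm_num
  rw [eint, eG, eH]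
  exact key

lemma eLpNorm_toReal_le_of_bound {E : Type*} [MeasurableSpace E] {μ : Measure E}
    {f : E → ℂ} {g : E → ℝ} {c : ℝ} (hc : 0 ≤ c) (h : ∀ k, ‖f k‖ ≤ c * ‖g k‖)
    (hg : MemLp g 2 μ) :
    (eLpNorm f 2 μ).toReal ≤ c * (eLpNorm g 2 μ).toReal := by
  have h1 : eLpNorm f 2 μ ≤ eLpNorm (c • g) 2 μ :=
    eLpNorm_mono fun k => by
      simpa [norm_smul, Real.norm_of_nonneg hc] using h k
  rw [eLpNorm_const_smul] at h1
  have hfin : ((‖c‖₊ : NNReal) : ENNReal) * eLpNorm g 2 μ ≠ ⊤ :=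
    ENNReal.mul_ne_top ENNReal.coe_ne_top hg.2.ne
  have h3 := ENNReal.toReal_mono hfin h1
  rwa [ENNReal.toReal_mul, ENNReal.coe_toReal, coe_nnnorm,
    Real.norm_of_nonneg hc] at h3

end Aux2
section Aux3

open Real MeasureTheory

variable {d : ℕ}

lemma hasGradientAt_nonrel (Mj : ℝ) (hMj : Mj ≠ 0) (p : EuclideanSpace ℝ (Fin d)) :
    HasGradientAt (fun x : EuclideanSpace ℝ (Fin d) => ‖x‖ ^ 2 / (2 * Mj)) (Mj⁻¹ • p) p := by
  have h := ((hasStrictFDerivAt_norm_sq p).hasFDerivAt).const_mul ((2 * Mj)⁻¹)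
  have h2 : HasFDerivAt (fun x : EuclideanSpace ℝ (Fin d) => ‖x‖ ^ 2 / (2 * Mj))
      (((2 * Mj)⁻¹ : ℝ) • (2 • (innerSL ℝ p))) p := by
    simpa [div_eq_inv_mul] using h
  rw [hasGradientAt_iff_hasFDerivAt]
  refine h2.congr_fderiv ?_
  ext y
  simp only [InnerProductSpace.toDual_apply_apply, real_inner_smul_left,
    ContinuousLinearMap.coe_smul', Pi.smul_apply, innerSL_apply_apply,
    smul_eq_mul, two_smul, ContinuousLinearMap.add_apply]
  field_simp
  ring

lemma hasGradientAt_semirel (Mj : ℝ) (hMj : 0 < Mj) (p : EuclideanSpace ℝ (Fin d)) :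
    HasGradientAt (fun x : EuclideanSpace ℝ (Fin d) => Real.sqrt (‖x‖ ^ 2 + Mj ^ 2))
      ((Real.sqrt (‖p‖ ^ 2 + Mj ^ 2))⁻¹ • p) p := by
  have hy : (0 : ℝ) < ‖p‖ ^ 2 + Mj ^ 2 := by positivity
  have hin : HasFDerivAt (fun x : EuclideanSpace ℝ (Fin d) => ‖x‖ ^ 2 + Mj ^ 2)
      (2 • (innerSL ℝ p)) p :=
    ((hasStrictFDerivAt_norm_sq p).hasFDerivAt).add_const _
  have hs : HasDerivAt Real.sqrt (1 / (2 * Real.sqrt (‖p‖ ^ 2 + Mj ^ 2)))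
      (‖p‖ ^ 2 + Mj ^ 2) := Real.hasDerivAt_sqrt hy.ne'
  have hcomp := hs.comp_hasFDerivAt p hin
  rw [hasGradientAt_iff_hasFDerivAt]
  have hsq : Real.sqrt (‖p‖ ^ 2 + Mj ^ 2) ≠ 0 := by positivity
  refine hcomp.congr_fderiv ?_
  ext y
  simp only [InnerProductSpace.toDual_apply_apply, real_inner_smul_left,
    ContinuousLinearMap.coe_smul', Pi.smul_apply, innerSL_apply_apply,
    smul_eq_mul, two_smul, ContinuousLinearMap.add_apply]
  field_simp
  ring

end Aux3
section Aux4

open Real MeasureTheory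

variable {d : ℕ} {m σ : ℝ}

lemma norm_exp_neg_I_mul (a b : ℝ) :
    ‖Complex.exp (-(Complex.I * (a : ℂ) * (b : ℂ)))‖ = 1 := by
  rw [show -(Complex.I * (a : ℂ) * (b : ℂ)) = ((-(a * b) : ℝ) : ℂ) * Complex.I by
    push_cast; ring]
  exact Complex.norm_exp_ofReal_mul_I _

lemma norm_exp_neg_real_mul_I (a : ℝ) :
    ‖Complex.exp (-((a : ℂ) * Complex.I))‖ = 1 := by
  rw [show -((a : ℂ) * Complex.I) = ((-a : ℝ) : ℂ) * Complex.I by push_cast; ring]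
  exact Complex.norm_exp_ofReal_mul_I _

lemma gradI_le (hm : 0 < m) (hσ : σ ∈ Set.Icc (1 / 2 : ℝ) 1)
    {χ : EuclideanSpace ℝ (Fin d) → ℝ}
    (hχ : MemLp (fun k => omega d m k ^ ((3 : ℝ) / 2 - σ) * χ k) 2 volume)
    {α : EuclideanSpace ℝ (Fin d) → ℂ} (hα : MemLp α 2 volume)
    (qj : EuclideanSpace ℝ (Fin d)) (i : Fin d) :
    ‖gradI d m χ qj α i‖ ≤ 4 * Real.pi * m ^ (σ - 1) *
      ((eLpNorm (fun k => omega d m k ^ ((3 : ℝ) / 2 - σ) * χ k) 2 volume).toReal *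
        (eLpNorm α 2 volume).toReal) := by
  obtain ⟨hσl, hσr⟩ := hσ
  set G : EuclideanSpace ℝ (Fin d) → ℝ :=
    fun k => ‖omega d m k ^ ((3 : ℝ) / 2 - σ) * χ k‖ with hGdef
  set H : EuclideanSpace ℝ (Fin d) → ℝ := fun k => ‖α k‖ with hHdef
  have hGn : ∀ k, 0 ≤ G k := fun k => norm_nonneg _
  have hHn : ∀ k, 0 ≤ H k := fun k => norm_nonneg _
  have hG2 : MemLp G 2 volume := hχ.norm
  have hH2 : MemLp H 2 volume := hα.norm
  have hGH : Integrable (fun k => G k * H k) volume := by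
    refine Integrable.mono' (g := fun k => G k ^ 2 + H k ^ 2)
      (hG2.integrable_sq.add hH2.integrable_sq) (hG2.1.mul hH2.1)
      (Filter.Eventually.of_forall fun k => ?_)
    rw [Real.norm_of_nonneg (mul_nonneg (hGn k) (hHn k))]
    show G k * H k ≤ G k ^ 2 + H k ^ 2
    nlinarith [sq_nonneg (G k - H k), hGn k, hHn k]
  have hpt : ∀ k : EuclideanSpace ℝ (Fin d),
      ‖2 * (Real.pi : ℂ) * Complex.I * ((k i : ℝ) : ℂ) *
          ((χ k / Real.sqrt (omega d m k) : ℝ) : ℂ) *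
          (α k * Complex.exp (((phase d k qj : ℝ) : ℂ) * Complex.I) -
            (starRingEnd ℂ) (α k) *
              Complex.exp (-(((phase d k qj : ℝ) : ℂ) * Complex.I)))‖ ≤
        4 * Real.pi * m ^ (σ - 1) * (G k * H k) := by
    intro k
    have hw : 0 < omega d m k := omega_pos hm k
    have hs : 0 < Real.sqrt (omega d m k) := Real.sqrt_pos.2 hw
    have hz : ‖α k * Complex.exp (((phase d k qj : ℝ) : ℂ) * Complex.I) -
        (starRingEnd ℂ) (α k) *
          Complex.exp (-(((phase d k qj : ℝ) : ℂ) * Complex.I))‖ ≤ 2 * ‖α k‖ := by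
      refine (norm_sub_le _ _).trans ?_
      rw [norm_mul, norm_mul, RCLike.norm_conj, Complex.norm_exp_ofReal_mul_I,
        norm_exp_neg_real_mul_I]
      ring_nf
      linarith [norm_nonneg (α k)]
    have heq : ‖2 * (Real.pi : ℂ) * Complex.I * ((k i : ℝ) : ℂ) *
        ((χ k / Real.sqrt (omega d m k) : ℝ) : ℂ) *
        (α k * Complex.exp (((phase d k qj : ℝ) : ℂ) * Complex.I) -
          (starRingEnd ℂ) (α k) *
            Complex.exp (-(((phase d k qj : ℝ) : ℂ) * Complex.I)))‖ =
        2 * Real.pi * |k i| * (|χ k| / Real.sqrt (omega d m k)) *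
          ‖α k * Complex.exp (((phase d k qj : ℝ) : ℂ) * Complex.I) -
            (starRingEnd ℂ) (α k) *
              Complex.exp (-(((phase d k qj : ℝ) : ℂ) * Complex.I))‖ := by
      simp only [norm_mul, Complex.norm_real, Complex.norm_I, Real.norm_eq_abs]
      rw [abs_div, abs_of_pos hs, abs_of_pos Real.pi_pos]
      norm_num
    rw [heq]
    have hki : |k i| ≤ omega d m k := (coord_le_norm k i).trans (norm_le_omega k)
    have hdivs : |k i| / Real.sqrt (omega d m k) ≤ Real.sqrt (omega d m k) := by
      rw [div_le_iff₀ hs, Real.mul_self_sqrt hw.le]; exact hki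
    have hsbound : Real.sqrt (omega d m k) ≤ m ^ (σ - 1) * omega d m k ^ ((3:ℝ)/2 - σ) := by
      have h1 := omega_rpow_le (k := k) hm (s := (1:ℝ)/2) (t := (3:ℝ)/2 - σ) (by linarith)
      rw [Real.sqrt_eq_rpow]
      convert h1 using 3
      ring
    have hGk : G k = omega d m k ^ ((3:ℝ)/2 - σ) * |χ k| := by
      show ‖omega d m k ^ ((3:ℝ)/2 - σ) * χ k‖ = _
      rw [Real.norm_eq_abs, abs_mul, abs_of_pos (Real.rpow_pos_of_pos hw _)]
    calc 2 * Real.pi * |k i| * (|χ k| / Real.sqrt (omega d m k)) * ‖_‖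
        ≤ 2 * Real.pi * |k i| * (|χ k| / Real.sqrt (omega d m k)) * (2 * ‖α k‖) := by
          gcongr
      _ = 4 * Real.pi * ((|k i| / Real.sqrt (omega d m k)) * (|χ k| * ‖α k‖)) := by
          field_simp; ring
      _ ≤ 4 * Real.pi * (Real.sqrt (omega d m k) * (|χ k| * ‖α k‖)) := by
          gcongr
      _ ≤ 4 * Real.pi * ((m ^ (σ - 1) * omega d m k ^ ((3:ℝ)/2 - σ)) * (|χ k| * ‖α k‖)) := by
          gcongr
      _ = 4 * Real.pi * m ^ (σ - 1) * (G k * H k) := by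
          rw [hGk, show H k = ‖α k‖ from rfl]; ring
  calc ‖gradI d m χ qj α i‖
      ≤ ∫ k, ‖2 * (Real.pi : ℂ) * Complex.I * ((k i : ℝ) : ℂ) *
          ((χ k / Real.sqrt (omega d m k) : ℝ) : ℂ) *
          (α k * Complex.exp (((phase d k qj : ℝ) : ℂ) * Complex.I) -
            (starRingEnd ℂ) (α k) *
              Complex.exp (-(((phase d k qj : ℝ) : ℂ) * Complex.I)))‖ :=
        norm_integral_le_integral_norm _
    _ ≤ ∫ k, 4 * Real.pi * m ^ (σ - 1) * (G k * H k) :=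
        integral_mono_of_nonneg (Filter.Eventually.of_forall fun k => norm_nonneg _)
          (hGH.const_mul _) (Filter.Eventually.of_forall hpt)
    _ = 4 * Real.pi * m ^ (σ - 1) * ∫ k, G k * H k := integral_const_mul _ _
    _ ≤ 4 * Real.pi * m ^ (σ - 1) *
        ((eLpNorm G 2 volume).toReal * (eLpNorm H 2 volume).toReal) := by
        refine mul_le_mul_of_nonneg_left (integral_mul_le_L2 hGn hHn hG2 hH2) ?_
        positivity
    _ = _ := by rw [hGdef, hHdef, eLpNorm_norm, eLpNorm_norm]

end Aux4
section Aux5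

open Real MeasureTheory

lemma master {d n : ℕ} {m σ : ℝ} (hm : 0 < m) (hσ : σ ∈ Set.Icc (1 / 2 : ℝ) 1)
    {χ : EuclideanSpace ℝ (Fin d) → ℝ}
    (hχ : MemLp (fun k => omega d m k ^ ((3 : ℝ) / 2 - σ) * χ k) 2 volume)
    {V : EuclideanSpace ℝ (Fin n × Fin d) → ℝ} {CV : ℝ}
    (hV1 : ∀ q, ‖gradient V q‖ ≤ CV)
    (f : Fin n → EuclideanSpace ℝ (Fin d) → ℝ) (t : ℝ) (u : PhaseSpace d n)
    (hu : MemLp (fun k => ((omega d m k ^ σ : ℝ) : ℂ) * u.2.2 k) 2 volume) :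
    normX d n σ m (vfield d n m χ V f t u) ≤
      Real.sqrt ((n : ℝ) * d) * (CV + (4 * Real.pi * m ^ (σ - 1) *
          (eLpNorm (fun k => omega d m k ^ ((3 : ℝ) / 2 - σ) * χ k) 2 volume).toReal) *
          (eLpNorm u.2.2 2 volume).toReal) +
        Real.sqrt (∑ j, ‖gradient (f j) (u.1 j)‖ ^ 2) +
        (n : ℝ) * m ^ (2 * σ - 2) *
          (eLpNorm (fun k => omega d m k ^ ((3 : ℝ) / 2 - σ) * χ k) 2 volume).toReal := by
  obtain ⟨hσl, hσr⟩ := hσ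
  set Cχ := (eLpNorm (fun k => omega d m k ^ ((3 : ℝ) / 2 - σ) * χ k) 2 volume).toReal
    with hCχdef
  have hCχ0 : 0 ≤ Cχ := ENNReal.toReal_nonneg
  set aα := (eLpNorm u.2.2 2 volume).toReal with haαdef
  have haα0 : 0 ≤ aα := ENNReal.toReal_nonneg
  have hCV0 : 0 ≤ CV := (norm_nonneg _).trans (hV1 0)
  -- measurability and L² membership of α
  have hwpos : ∀ k : EuclideanSpace ℝ (Fin d), 0 < omega d m k := fun k => omega_pos hm k
  have hwσpos : ∀ k : EuclideanSpace ℝ (Fin d), (0 : ℝ) < omega d m k ^ σ :=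
    fun k => Real.rpow_pos_of_pos (hwpos k) σ
  have hcσ : Continuous fun k : EuclideanSpace ℝ (Fin d) => omega d m k ^ σ :=
    continuous_omega.rpow_const fun k => Or.inl (hwpos k).ne'
  have hαm : AEStronglyMeasurable u.2.2 volume := by
    have h1 : Continuous fun k : EuclideanSpace ℝ (Fin d) =>
        (((omega d m k ^ σ)⁻¹ : ℝ) : ℂ) :=
      Complex.continuous_ofReal.comp (hcσ.inv₀ fun k => (hwσpos k).ne')
    have h2 : u.2.2 = fun k => (((omega d m k ^ σ)⁻¹ : ℝ) : ℂ) *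
        (((omega d m k ^ σ : ℝ) : ℂ) * u.2.2 k) := by
      funext k
      rw [← mul_assoc, ← Complex.ofReal_mul, inv_mul_cancel₀ (hwσpos k).ne',
        Complex.ofReal_one, one_mul]
    rw [h2]
    exact h1.aestronglyMeasurable.mul hu.1
  have hα2 : MemLp u.2.2 2 volume := by
    refine hu.of_le_mul (c := (m ^ σ)⁻¹) hαm (Filter.Eventually.of_forall fun k => ?_)
    have h1 : (1 : ℝ) ≤ (m ^ σ)⁻¹ * omega d m k ^ σ := by
      rw [← div_eq_inv_mul, le_div_iff₀ (Real.rpow_pos_of_pos hm σ), one_mul]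
      exact Real.rpow_le_rpow hm.le (m_le_omega hm k) (by linarith)
    calc ‖u.2.2 k‖ = 1 * ‖u.2.2 k‖ := (one_mul _).symm
      _ ≤ ((m ^ σ)⁻¹ * omega d m k ^ σ) * ‖u.2.2 k‖ :=
          mul_le_mul_of_nonneg_right h1 (norm_nonneg _)
      _ = (m ^ σ)⁻¹ * ‖((omega d m k ^ σ : ℝ) : ℂ) * u.2.2 k‖ := by
          rw [norm_mul, Complex.norm_real, Real.norm_eq_abs,
            abs_of_pos (hwσpos k)]
          ring
  -- the time-evolved field β
  set β := fun k : EuclideanSpace ℝ (Fin d) =>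
    Complex.exp (-(Complex.I * (t : ℂ) * ((omega d m k : ℝ) : ℂ))) * u.2.2 k with hβdef
  have hβnorm : ∀ k, ‖β k‖ = ‖u.2.2 k‖ := fun k => by
    rw [hβdef]
    show ‖Complex.exp _ * _‖ = _
    rw [norm_mul, norm_exp_neg_I_mul, one_mul]
  have hβm : AEStronglyMeasurable β volume := by
    have h1 : Continuous fun k : EuclideanSpace ℝ (Fin d) =>
        Complex.exp (-(Complex.I * (t : ℂ) * ((omega d m k : ℝ) : ℂ))) :=
      Complex.continuous_exp.comp
        (((continuous_const.mul continuous_const).mul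
          (Complex.continuous_ofReal.comp continuous_omega)).neg)
    exact h1.aestronglyMeasurable.mul hαm
  have hβ2 : MemLp β 2 volume :=
    hα2.of_le hβm (Filter.Eventually.of_forall fun k => le_of_eq (hβnorm k))
  have hβL2 : eLpNorm β 2 volume = eLpNorm u.2.2 2 volume :=
    eLpNorm_congr_norm_ae (Filter.Eventually.of_forall hβnorm)
  -- gradI bound
  set K := 4 * Real.pi * m ^ (σ - 1) * Cχ with hKdef
  have hK0 : 0 ≤ K := by
    rw [hKdef]; positivity
  have hgradI : ∀ (j : Fin n) (i : Fin d),
      ‖gradI d m χ (qblock d n u.2.1 j) β i‖ ≤ K * aα := by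
    intro j i
    have h := gradI_le hm ⟨hσl, hσr⟩ hχ hβ2 (qblock d n u.2.1 j) i
    rw [hβL2] at h
    calc ‖gradI d m χ (qblock d n u.2.1 j) β i‖
        ≤ 4 * Real.pi * m ^ (σ - 1) * (Cχ * aα) := h
      _ = K * aα := by rw [hKdef]; ring
  -- unfold and bound the three blocks
  rw [normX]
  refine sqrt_add3_le ?_ ?_ ?_ (by positivity) (Real.sqrt_nonneg _) (by positivity)
  · -- momentum block
    have hco : ∀ (j : Fin n) (i : Fin d),
        ‖(vfield d n m χ V f t u).1 j i‖ ≤ CV + K * aα := by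
      intro j i
      show ‖-(gradient V u.2.1 (j, i)) -
        (gradI d m χ (qblock d n u.2.1 j) β i).re‖ ≤ CV + K * aα
      rw [Real.norm_eq_abs]
      have h1 : |gradient V u.2.1 (j, i)| ≤ CV :=
        (coord_le_norm (gradient V u.2.1) (j, i)).trans (hV1 _)
      have h2 : |(gradI d m χ (qblock d n u.2.1 j) β i).re| ≤
          ‖gradI d m χ (qblock d n u.2.1 j) β i‖ := by
        exact Complex.abs_re_le_norm _
      have h3 : -(gradient V u.2.1 (j, i)) - (gradI d m χ (qblock d n u.2.1 j) β i).re =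
          -(gradient V u.2.1 (j, i) + (gradI d m χ (qblock d n u.2.1 j) β i).re) := by
        ring
      rw [h3, abs_neg]
      exact (abs_add_le _ _).trans (add_le_add h1 (h2.trans (hgradI j i)))
    have hPj : ∀ j : Fin n, ‖(vfield d n m χ V f t u).1 j‖ ^ 2 ≤ (CV + K * aα) ^ 2 * d := by
      intro j
      calc ‖(vfield d n m χ V f t u).1 j‖ ^ 2
          = ∑ i, ‖(vfield d n m χ V f t u).1 j i‖ ^ 2 := euclid_norm_sq _
        _ ≤ ∑ _i : Fin d, (CV + K * aα) ^ 2 :=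
            Finset.sum_le_sum fun i _ =>
              pow_le_pow_left₀ (norm_nonneg _) (hco j i) 2
        _ = (CV + K * aα) ^ 2 * d := by
            rw [Finset.sum_const, Finset.card_univ, Fintype.card_fin, nsmul_eq_mul]
            ring
    calc ∑ j, ‖(vfield d n m χ V f t u).1 j‖ ^ 2
        ≤ ∑ _j : Fin n, (CV + K * aα) ^ 2 * d := Finset.sum_le_sum fun j _ => hPj j
      _ = (n : ℝ) * ((CV + K * aα) ^ 2 * d) := by
          rw [Finset.sum_const, Finset.card_univ, Fintype.card_fin, nsmul_eq_mul]
      _ = (Real.sqrt ((n : ℝ) * d) * (CV + K * aα)) ^ 2 := by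
          rw [mul_pow, Real.sq_sqrt (by positivity : (0:ℝ) ≤ (n : ℝ) * d)]
          ring
  · -- position block
    rw [Real.sq_sqrt (Finset.sum_nonneg fun j _ => sq_nonneg _)]
    exact le_of_eq
      (prod_norm_sq (fun j => gradient (f j) (u.1 j)) _ fun ji => rfl)
  · -- field block
    refine pow_le_pow_left₀ ENNReal.toReal_nonneg ?_ 2
    refine eLpNorm_toReal_le_of_bound (c := (n : ℝ) * m ^ (2 * σ - 2))
      (by positivity) (fun k => ?_) hχ
    show ‖((omega d m k ^ σ : ℝ) : ℂ) *
        (Complex.exp (-(Complex.I * ((-t : ℝ) : ℂ) * ((omega d m k : ℝ) : ℂ))) *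
          (-Complex.I * ∑ j : Fin n, ((χ k / Real.sqrt (omega d m k) : ℝ) : ℂ) *
            Complex.exp (-(((phase d k (qblock d n u.2.1 j) : ℝ) : ℂ) * Complex.I))))‖ ≤
      (n : ℝ) * m ^ (2 * σ - 2) * ‖omega d m k ^ ((3 : ℝ) / 2 - σ) * χ k‖
    have hw := hwpos k
    have hs : 0 < Real.sqrt (omega d m k) := Real.sqrt_pos.2 hw
    have hsum : ‖∑ j : Fin n, ((χ k / Real.sqrt (omega d m k) : ℝ) : ℂ) *
        Complex.exp (-(((phase d k (qblock d n u.2.1 j) : ℝ) : ℂ) * Complex.I))‖ ≤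
        (n : ℝ) * (|χ k| / Real.sqrt (omega d m k)) := by
      refine (norm_sum_le _ _).trans ?_
      have he : ∀ j : Fin n, ‖((χ k / Real.sqrt (omega d m k) : ℝ) : ℂ) *
          Complex.exp (-(((phase d k (qblock d n u.2.1 j) : ℝ) : ℂ) * Complex.I))‖ =
          |χ k| / Real.sqrt (omega d m k) := fun j => by
        rw [norm_mul, norm_exp_neg_real_mul_I, mul_one, Complex.norm_real,
          Real.norm_eq_abs, abs_div, abs_of_pos hs]
      calc (∑ j : Fin n, ‖((χ k / Real.sqrt (omega d m k) : ℝ) : ℂ) *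
            Complex.exp (-(((phase d k (qblock d n u.2.1 j) : ℝ) : ℂ) * Complex.I))‖)
          = ∑ _j : Fin n, |χ k| / Real.sqrt (omega d m k) :=
            Finset.sum_congr rfl fun j _ => he j
        _ = (n : ℝ) * (|χ k| / Real.sqrt (omega d m k)) := by
            rw [Finset.sum_const, Finset.card_univ, Fintype.card_fin, nsmul_eq_mul]
        _ ≤ (n : ℝ) * (|χ k| / Real.sqrt (omega d m k)) := le_rfl
    have hrhs : ‖omega d m k ^ ((3 : ℝ) / 2 - σ) * χ k‖ =
        omega d m k ^ ((3 : ℝ) / 2 - σ) * |χ k| := by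
      rw [Real.norm_eq_abs, abs_mul, abs_of_pos (Real.rpow_pos_of_pos hw _)]
    have hkey : omega d m k ^ σ / Real.sqrt (omega d m k) ≤
        m ^ (2 * σ - 2) * omega d m k ^ ((3 : ℝ) / 2 - σ) := by
      rw [Real.sqrt_eq_rpow, ← Real.rpow_sub hw]
      have h2 := omega_rpow_le (k := k) hm (s := σ - 1 / 2) (t := (3 : ℝ) / 2 - σ)
        (by linarith)
      rw [show σ - 1 / 2 - ((3 : ℝ) / 2 - σ) = 2 * σ - 2 by ring] at h2
      rw [show σ - 1 / (2:ℝ) = σ - 1/2 from rfl]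
      exact h2
    rw [norm_mul, norm_mul, norm_mul, norm_neg, Complex.norm_I, norm_exp_neg_I_mul,
      Complex.norm_real, Real.norm_eq_abs, abs_of_pos (hwσpos k), one_mul, one_mul]
    calc omega d m k ^ σ * ‖∑ j : Fin n, ((χ k / Real.sqrt (omega d m k) : ℝ) : ℂ) *
          Complex.exp (-(((phase d k (qblock d n u.2.1 j) : ℝ) : ℂ) * Complex.I))‖
        ≤ omega d m k ^ σ * ((n : ℝ) * (|χ k| / Real.sqrt (omega d m k))) :=
          mul_le_mul_of_nonneg_left hsum (Real.rpow_nonneg hw.le σ)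
      _ = (n : ℝ) * (omega d m k ^ σ / Real.sqrt (omega d m k) * |χ k|) := by
          ring
      _ ≤ (n : ℝ) * (m ^ (2 * σ - 2) * omega d m k ^ ((3 : ℝ) / 2 - σ) * |χ k|) := by
          gcongr
      _ = (n : ℝ) * m ^ (2 * σ - 2) * ‖omega d m k ^ ((3 : ℝ) / 2 - σ) * χ k‖ := by
          rw [hrhs]; ring

end Aux5
noncomputable section

/-- Quantitative vector field bound: under V ∈ C²_b and ω^{3/2−σ}χ ∈ L², σ ∈ [1/2,1],
there is C > 0 with ‖v(t,u)‖_{X^σ} ≤ C(‖u‖²_{X⁰} + 1) for all t and u ∈ X^σ, where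
v(t,u) = Φ^f_{−t}(𝒩(Φ^f_t(u))). In the semi-relativistic case the sharper bound
‖v(t,u)‖_{X^σ} ≤ C(‖α‖²_{L²} + 1) holds. -/
theorem vfield_bound (d n : ℕ) (m σ : ℝ) (hm : 0 < m)
    (hσ : σ ∈ Set.Icc (1 / 2 : ℝ) 1)
    (χ : EuclideanSpace ℝ (Fin d) → ℝ)
    (hχ : MemLp (fun k => omega d m k ^ ((3 : ℝ) / 2 - σ) * χ k) 2 volume)
    (V : EuclideanSpace ℝ (Fin n × Fin d) → ℝ)
    (hV : ContDiff ℝ 2 V)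
    (hV1 : ∃ C, ∀ q, ‖gradient V q‖ ≤ C)
    (hV2 : ∃ C, ∀ q, ‖fderiv ℝ (fderiv ℝ V) q‖ ≤ C)
    (M : Fin n → ℝ) (hM : ∀ j, 0 < M j)
    (f : Fin n → EuclideanSpace ℝ (Fin d) → ℝ)
    (hf : (∀ j p, f j p = Real.sqrt (‖p‖ ^ 2 + M j ^ 2)) ∨
          (∀ j p, f j p = ‖p‖ ^ 2 / (2 * M j))) :
    (∃ C > 0, ∀ (t : ℝ) (u : PhaseSpace d n),
        MemLp (fun k => ((omega d m k ^ σ : ℝ) : ℂ) * u.2.2 k) 2 volume →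
        normX d n σ m (vfield d n m χ V f t u) ≤ C * ((normX d n 0 m u) ^ 2 + 1)) ∧
    ((∀ j p, f j p = Real.sqrt (‖p‖ ^ 2 + M j ^ 2)) →
      ∃ C > 0, ∀ (t : ℝ) (u : PhaseSpace d n),
        MemLp (fun k => ((omega d m k ^ σ : ℝ) : ℂ) * u.2.2 k) 2 volume →
        normX d n σ m (vfield d n m χ V f t u) ≤
          C * (((eLpNorm u.2.2 2 volume).toReal) ^ 2 + 1)) := by
  obtain ⟨hσl, hσr⟩ := hσ
  obtain ⟨CV', hCV'⟩ := hV1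
  set CV := max CV' 0 with hCVdef
  have hCV0 : (0:ℝ) ≤ CV := le_max_right _ _
  have hV1' : ∀ q, ‖gradient V q‖ ≤ CV := fun q => (hCV' q).trans (le_max_left _ _)
  set Cχ := (eLpNorm (fun k => omega d m k ^ ((3 : ℝ) / 2 - σ) * χ k) 2 volume).toReal
    with hCχdef
  have hCχ0 : 0 ≤ Cχ := ENNReal.toReal_nonneg
  set K := 4 * Real.pi * m ^ (σ - 1) * Cχ with hKdef
  have hK0 : 0 ≤ K := by rw [hKdef]; positivity
  set Cα := (n : ℝ) * m ^ (2 * σ - 2) * Cχ with hCαdef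
  have hCα0 : 0 ≤ Cα := by rw [hCαdef]; positivity
  set B := 1 + ∑ j, (M j)⁻¹ with hBdef
  have hBsum : (0:ℝ) ≤ ∑ j, (M j)⁻¹ :=
    Finset.sum_nonneg fun j _ => inv_nonneg.2 (hM j).le
  have hB1 : (1:ℝ) ≤ B := by rw [hBdef]; linarith
  have hB0 : (0:ℝ) ≤ B := by linarith
  have hBj : ∀ j : Fin n, (M j)⁻¹ ≤ B := by
    intro j
    have h1 : (M j)⁻¹ ≤ ∑ i, (M i)⁻¹ :=
      Finset.single_le_sum (f := fun i => (M i)⁻¹)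
        (fun i _ => inv_nonneg.2 (hM i).le) (Finset.mem_univ j)
    rw [hBdef]; linarith
  clear_value CV Cχ K Cα B
  -- middle term bounds
  have hmidsemi : (∀ j p, f j p = Real.sqrt (‖p‖ ^ 2 + M j ^ 2)) →
      ∀ u : PhaseSpace d n,
        Real.sqrt (∑ j, ‖gradient (f j) (u.1 j)‖ ^ 2) ≤ Real.sqrt n := by
    intro hsf u
    have hgj : ∀ j : Fin n, ‖gradient (f j) (u.1 j)‖ ≤ 1 := by
      intro j
      have hfj : f j = fun p => Real.sqrt (‖p‖ ^ 2 + M j ^ 2) := funext (hsf j)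
      rw [hfj, (hasGradientAt_semirel (M j) (hM j) (u.1 j)).gradient]
      have hy : (0:ℝ) < Real.sqrt (‖u.1 j‖ ^ 2 + M j ^ 2) :=
        Real.sqrt_pos.2 (add_pos_of_nonneg_of_pos (sq_nonneg _) (pow_pos (hM j) 2))
      rw [norm_smul, Real.norm_eq_abs, abs_inv, abs_of_pos hy, ← div_eq_inv_mul,
        div_le_one hy]
      calc ‖u.1 j‖ = Real.sqrt (‖u.1 j‖ ^ 2) := (Real.sqrt_sq (norm_nonneg _)).symm
        _ ≤ _ := Real.sqrt_le_sqrt (by nlinarith [sq_nonneg (M j), hM j])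
    calc Real.sqrt (∑ j, ‖gradient (f j) (u.1 j)‖ ^ 2)
        ≤ Real.sqrt (∑ _j : Fin n, (1:ℝ)) := Real.sqrt_le_sqrt
          (Finset.sum_le_sum fun j _ =>
            pow_le_pow_left₀ (norm_nonneg _) (hgj j) 2 |>.trans (by norm_num))
      _ = Real.sqrt n := by rw [Finset.sum_const, Finset.card_univ, Fintype.card_fin,
            nsmul_eq_mul, mul_one]
  constructor
  · -- general bound
    refine ⟨Real.sqrt ((n:ℝ) * d) * (CV + K) + B + Real.sqrt n + Cα + 1, ?_, ?_⟩
    · have h1 : 0 ≤ Real.sqrt ((n:ℝ) * d) * (CV + K) := by positivity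
      have h2 : 0 ≤ Real.sqrt (n:ℝ) := Real.sqrt_nonneg _
      linarith
    intro t u hu
    have hmaster := master hm ⟨hσl, hσr⟩ hχ hV1' f t u hu
    rw [← hCχdef, ← hKdef, ← hCαdef] at hmaster
    set aα := (eLpNorm u.2.2 2 volume).toReal with haαdef
    have haα0 : 0 ≤ aα := ENNReal.toReal_nonneg
    set N := normX d n 0 m u with hNdef
    have hN0 : 0 ≤ N := Real.sqrt_nonneg _
    have h0fun : (fun k => ((omega d m k ^ (0:ℝ) : ℝ) : ℂ) * u.2.2 k) = u.2.2 := by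
      funext k
      rw [Real.rpow_zero, Complex.ofReal_one, one_mul]
    have hsum0 : (0:ℝ) ≤ ∑ j, ‖u.1 j‖ ^ 2 :=
      Finset.sum_nonneg fun j _ => sq_nonneg _
    have hN2 : N ^ 2 = (∑ j, ‖u.1 j‖ ^ 2) + ‖u.2.1‖ ^ 2 + aα ^ 2 := by
      rw [hNdef, normX, h0fun, ← haαdef]
      exact Real.sq_sqrt (by positivity)
    clear_value N aα
    have haαN : aα ≤ N := by
      nlinarith only [hN2, sq_nonneg ‖u.2.1‖, hsum0, hN0, haα0]
    have hPN : (∑ j, ‖u.1 j‖ ^ 2) ≤ N ^ 2 := by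
      linarith only [hN2, sq_nonneg ‖u.2.1‖, sq_nonneg aα]
    have hN1 : N ≤ N ^ 2 + 1 := by nlinarith only [sq_nonneg (N - 1)]
    have h1N : (1:ℝ) ≤ N ^ 2 + 1 := by nlinarith only [sq_nonneg N]
    have hN21 : (0:ℝ) ≤ N ^ 2 + 1 := by linarith only [h1N]
    have hmid : Real.sqrt (∑ j, ‖gradient (f j) (u.1 j)‖ ^ 2) ≤
        (B + Real.sqrt n) * (N ^ 2 + 1) := by
      rcases hf with hsf | hnf
      · have h1 := hmidsemi hsf u
        have h2 : Real.sqrt (n:ℝ) ≤ (B + Real.sqrt n) * (N ^ 2 + 1) := by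
          linarith only [mul_nonneg hB0 hN21,
            mul_le_mul_of_nonneg_left h1N (Real.sqrt_nonneg (n:ℝ))]
        linarith only [h1, h2]
      · have hgj : ∀ j : Fin n, ‖gradient (f j) (u.1 j)‖ ≤ B * ‖u.1 j‖ := by
          intro j
          have hfj : f j = fun p => ‖p‖ ^ 2 / (2 * M j) := funext (hnf j)
          rw [hfj, (hasGradientAt_nonrel (M j) (hM j).ne' (u.1 j)).gradient]
          rw [norm_smul, Real.norm_eq_abs, abs_inv, abs_of_pos (hM j)]
          exact mul_le_mul_of_nonneg_right (hBj j) (norm_nonneg _)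
        have hsq : (∑ j, ‖gradient (f j) (u.1 j)‖ ^ 2) ≤ B ^ 2 * N ^ 2 := by
          calc (∑ j, ‖gradient (f j) (u.1 j)‖ ^ 2)
              ≤ ∑ j, B ^ 2 * ‖u.1 j‖ ^ 2 := Finset.sum_le_sum fun j _ => by
                have := pow_le_pow_left₀ (norm_nonneg _) (hgj j) 2
                calc ‖gradient (f j) (u.1 j)‖ ^ 2 ≤ (B * ‖u.1 j‖) ^ 2 := this
                  _ = B ^ 2 * ‖u.1 j‖ ^ 2 := by ring
            _ = B ^ 2 * ∑ j, ‖u.1 j‖ ^ 2 := by rw [Finset.mul_sum]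
            _ ≤ B ^ 2 * N ^ 2 := mul_le_mul_of_nonneg_left hPN (by positivity)
        calc Real.sqrt (∑ j, ‖gradient (f j) (u.1 j)‖ ^ 2)
            ≤ Real.sqrt (B ^ 2 * N ^ 2) := Real.sqrt_le_sqrt hsq
          _ = B * N := by
              rw [show B ^ 2 * N ^ 2 = (B * N) ^ 2 by ring]
              exact Real.sqrt_sq (by positivity)
          _ ≤ (B + Real.sqrt n) * (N ^ 2 + 1) := by
              linarith only [mul_le_mul_of_nonneg_left hN1 hB0,
                mul_nonneg (Real.sqrt_nonneg (n:ℝ)) hN21]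
    have e1 : CV + K * aα ≤ (CV + K) * (N ^ 2 + 1) := by
      linarith only [mul_le_mul_of_nonneg_left haαN hK0,
        mul_le_mul_of_nonneg_left hN1 hK0,
        mul_le_mul_of_nonneg_left h1N hCV0]
    have e1' : Real.sqrt ((n:ℝ) * d) * (CV + K * aα) ≤
        (Real.sqrt ((n:ℝ) * d) * (CV + K)) * (N ^ 2 + 1) := by
      rw [mul_assoc]
      exact mul_le_mul_of_nonneg_left e1 (Real.sqrt_nonneg _)
    have e3 : Cα ≤ Cα * (N ^ 2 + 1) := by
      linarith only [mul_le_mul_of_nonneg_left h1N hCα0]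
    calc normX d n σ m (vfield d n m χ V f t u)
        ≤ Real.sqrt ((n:ℝ) * d) * (CV + K * aα) +
            Real.sqrt (∑ j, ‖gradient (f j) (u.1 j)‖ ^ 2) + Cα := hmaster
      _ ≤ (Real.sqrt ((n:ℝ) * d) * (CV + K)) * (N ^ 2 + 1) +
            (B + Real.sqrt n) * (N ^ 2 + 1) + Cα * (N ^ 2 + 1) := by
          linarith
      _ = (Real.sqrt ((n:ℝ) * d) * (CV + K) + B + Real.sqrt n + Cα) * (N ^ 2 + 1) := by
          ring
      _ ≤ (Real.sqrt ((n:ℝ) * d) * (CV + K) + B + Real.sqrt n + Cα + 1) * (N ^ 2 + 1) := by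
          linarith only [h1N]
  · -- semirelativistic sharper bound
    intro hsf
    refine ⟨Real.sqrt ((n:ℝ) * d) * (CV + K) + Real.sqrt n + Cα + 1, ?_, ?_⟩
    · have h1 : 0 ≤ Real.sqrt ((n:ℝ) * d) * (CV + K) := by positivity
      have h2 : 0 ≤ Real.sqrt (n:ℝ) := Real.sqrt_nonneg _
      linarith
    intro t u hu
    have hmaster := master hm ⟨hσl, hσr⟩ hχ hV1' f t u hu
    rw [← hCχdef, ← hKdef, ← hCαdef] at hmaster
    set aα := (eLpNorm u.2.2 2 volume).toReal with haαdef
    have haα0 : 0 ≤ aα := ENNReal.toReal_nonneg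
    clear_value aα
    have haα1 : aα ≤ aα ^ 2 + 1 := by nlinarith only [sq_nonneg (aα - 1)]
    have h1aα : (1:ℝ) ≤ aα ^ 2 + 1 := by nlinarith only [sq_nonneg aα]
    have haα21 : (0:ℝ) ≤ aα ^ 2 + 1 := by linarith only [h1aα]
    have hmid := hmidsemi hsf u
    have e1 : CV + K * aα ≤ (CV + K) * (aα ^ 2 + 1) := by
      linarith only [mul_le_mul_of_nonneg_left haα1 hK0,
        mul_le_mul_of_nonneg_left h1aα hCV0]
    have e1' : Real.sqrt ((n:ℝ) * d) * (CV + K * aα) ≤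
        (Real.sqrt ((n:ℝ) * d) * (CV + K)) * (aα ^ 2 + 1) := by
      rw [mul_assoc]
      exact mul_le_mul_of_nonneg_left e1 (Real.sqrt_nonneg _)
    have e2 : Real.sqrt (n:ℝ) ≤ Real.sqrt (n:ℝ) * (aα ^ 2 + 1) := by
      linarith only [mul_le_mul_of_nonneg_left h1aα (Real.sqrt_nonneg (n:ℝ))]
    have e3 : Cα ≤ Cα * (aα ^ 2 + 1) := by
      linarith only [mul_le_mul_of_nonneg_left h1aα hCα0]
    calc normX d n σ m (vfield d n m χ V f t u)
        ≤ Real.sqrt ((n:ℝ) * d) * (CV + K * aα) +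
            Real.sqrt (∑ j, ‖gradient (f j) (u.1 j)‖ ^ 2) + Cα := hmaster
      _ ≤ (Real.sqrt ((n:ℝ) * d) * (CV + K)) * (aα ^ 2 + 1) +
            Real.sqrt (n:ℝ) * (aα ^ 2 + 1) + Cα * (aα ^ 2 + 1) := by
          linarith
      _ = (Real.sqrt ((n:ℝ) * d) * (CV + K) + Real.sqrt n + Cα) * (aα ^ 2 + 1) := by
          ring
      _ ≤ (Real.sqrt ((n:ℝ) * d) * (CV + K) + Real.sqrt n + Cα + 1) * (aα ^ 2 + 1) := by
          linarith only [h1aα]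


end
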